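/- Suppose formal power series f, x, y, z over ℚ with zero constant terms for x, y, z satisfy the system: f = t + x + y, x = (f−z)², y = (f−z)(t+y)t, z = (f−z)(x−z), and f has zero constant term. Then f satisfies t³f² + t²f² + 2t²f + tf + t − f = 0. -/

import Mathlib

open PowerSeries

/-- If `f, x, y, z ∈ ℚ[[t]]` have zero constant terms and satisfy the system
`f = t + x + y`, `x = (f−z)²`, `y = (f−z)(t+y)t`, `z = (f−z)(x−z)`, then
`t³f² + t²f² + 2t²f + tf + t − f = 0`. -/
theorem system_implies_quadratic (f x y z : PowerSeries ℚ)
    (hf0 : constantCoeff f = 0) (hx0 : constantCoeff x = 0)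
    (hy0 : constantCoeff y = 0) (hz0 : constantCoeff z = 0)
    (h1 : f = X + x + y)
    (h2 : x = (f - z)^2)
    (h3 : y = (f - z) * (X + y) * X)
    (h4 : z = (f - z) * (x - z)) :
    X^3 * f^2 + X^2 * f^2 + 2 * X^2 * f + X * f + X - f = 0 := by
  set g := f - z with hg
  have hz3 : z * (1 + g) = g ^ 3 := by
    rw [hg]; linear_combination h4 + (f - z) * h2
  have hy : y * (1 - g * X) = g * X ^ 2 := by
    rw [hg]; linear_combination h3
  have hr1 : g = X * (1 + g + g ^ 2) := by
    rw [hg]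
    linear_combination (1 + (f - z)) * (1 - (f - z) * X) * h1 +
      (1 + (f - z)) * (1 - (f - z) * X) * h2 - (1 - (f - z) * X) * hz3 +
      (1 + (f - z)) * hy
  have hr2 : f * (1 + g) = g * (1 + g + g ^ 2) := by
    rw [hg]; linear_combination hz3
  have key : (1 + g + g ^ 2) ^ 3 * (1 + g) ^ 2 *
      (X ^ 3 * f ^ 2 + X ^ 2 * f ^ 2 + 2 * X ^ 2 * f + X * f + X - f) = 0 := by
    linear_combination
      (-((1 + g) ^ 2 *
        ((X ^ 2 * (1 + g + g ^ 2) ^ 2 + X * (1 + g + g ^ 2) * g + g ^ 2) * f ^ 2 +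
          (X * (1 + g + g ^ 2) + g) * (1 + g + g ^ 2) * (f ^ 2 + 2 * f) +
          (1 + g + g ^ 2) ^ 2 * (f + 1)))) * hr1 +
      ((g ^ 3 + g ^ 2 * (1 + g + g ^ 2)) * (f * (1 + g) + g * (1 + g + g ^ 2)) +
        (2 * g ^ 2 * (1 + g + g ^ 2) + g * (1 + g + g ^ 2) ^ 2 -
          (1 + g + g ^ 2) ^ 3) * (1 + g)) * hr2
  have hgc : constantCoeff g = 0 := by
    rw [hg]; simp [hf0, hz0]
  have hne : (1 + g + g ^ 2) ^ 3 * (1 + g) ^ 2 ≠ 0 := by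
    intro h
    have := congrArg (constantCoeff) h
    simp [hgc] at this
  exact (mul_eq_zero.mp key).resolve_left hne
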